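/- If the system (D,H) is s-sparse-controllable, then there exists an index set S ⊆ {1,…,L} with |S| = s such that the N×(N+s) real matrix [D | H_S] has rank N; consequently s ≥ N − rank(D). -/

import Mathlib

open Matrix

/-- `h` is `s`-sparse: at most `s` nonzero entries. -/
def IsSparse {L : ℕ} (s : ℕ) (h : Fin L → ℝ) : Prop :=
  {i : Fin L | h i ≠ 0}.ncard ≤ s

/-- Inputs `h 0, …, h (K-1)` steer the state `xinit` to `xfinal`:
`xfinal − D^K xinit = ∑_{k=1}^{K} D^{K−k} H h_k`. -/
def Steers {N L : ℕ} (D : Matrix (Fin N) (Fin N) ℝ) (H : Matrix (Fin N) (Fin L) ℝ)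
    (K : ℕ) (h : Fin K → Fin L → ℝ) (xinit xfinal : Fin N → ℝ) : Prop :=
  xfinal - (D ^ K) *ᵥ xinit = ∑ k : Fin K, (D ^ (K - 1 - (k : ℕ))) *ᵥ (H *ᵥ h k)

/-- The system `(D, H)` is `s`-sparse-controllable. -/
def SparseControllable (N L s : ℕ) (D : Matrix (Fin N) (Fin N) ℝ)
    (H : Matrix (Fin N) (Fin L) ℝ) : Prop :=
  ∀ xinit xfinal : Fin N → ℝ, ∃ K : ℕ, 0 < K ∧ ∃ h : Fin K → Fin L → ℝ,
    (∀ k, IsSparse s (h k)) ∧ Steers D H K h xinit xfinal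

/-- The range of `[A | B]` (as a linear map) is the sup of the ranges of `A` and `B`. -/
lemma range_fromColumns_aux {m n₁ n₂ : Type*} [Fintype n₁] [Fintype n₂]
    (A : Matrix m n₁ ℝ) (B : Matrix m n₂ ℝ) :
    LinearMap.range (Matrix.fromCols A B).mulVecLin
      = LinearMap.range A.mulVecLin ⊔ LinearMap.range B.mulVecLin := by
  apply le_antisymm
  · rintro x ⟨v, rfl⟩
    have hv : v = Sum.elim (v ∘ Sum.inl) (v ∘ Sum.inr) := by
      funext j; cases j <;> rfl
    rw [Matrix.mulVecLin_apply, hv, Matrix.fromCols_mulVec_sumElim]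
    exact Submodule.add_mem_sup ⟨_, rfl⟩ ⟨_, rfl⟩
  · apply sup_le
    · rintro x ⟨u, rfl⟩
      exact ⟨Sum.elim u 0, by
        simp [Matrix.mulVecLin_apply, Matrix.fromCols_mulVec_sumElim]⟩
    · rintro x ⟨u, rfl⟩
      exact ⟨Sum.elim 0 u, by
        simp [Matrix.mulVecLin_apply, Matrix.fromCols_mulVec_sumElim]⟩

/-- If `(D,H)` is `s`-sparse-controllable then there is an index set `S` with `|S| = s`
such that `[D | H_S]` has rank `N`; consequently `s ≥ N − rank D`. -/
theorem sparse_controllable_necessary (N L s : ℕ) (hN : 0 < N) (hL : 0 < L)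
    (hs : 0 < s) (hsL : s ≤ L)
    (D : Matrix (Fin N) (Fin N) ℝ) (H : Matrix (Fin N) (Fin L) ℝ)
    (hctrl : SparseControllable N L s D H) :
    (∃ S : Finset (Fin L), S.card = s ∧
      (Matrix.fromCols D (H.submatrix id (Subtype.val : {j : Fin L // j ∈ S} → Fin L))).rank
        = N) ∧
    N - D.rank ≤ s := by
  classical
  -- Every vector lies in range D ⊔ range H_S for some S with |S| = s.
  have key : ∀ x : Fin N → ℝ, ∃ S : Finset (Fin L), S.card = s ∧
      x ∈ LinearMap.range D.mulVecLin ⊔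
        LinearMap.range
          (H.submatrix id (Subtype.val : {j : Fin L // j ∈ S} → Fin L)).mulVecLin := by
    intro x
    obtain ⟨K, hK, h, hsp, hst⟩ := hctrl 0 x
    have hx : x = ∑ k : Fin K, (D ^ (K - 1 - (k : ℕ))) *ᵥ (H *ᵥ h k) := by
      simpa [Steers, Matrix.mulVec_zero, sub_zero] using hst
    set klast : Fin K := ⟨K - 1, Nat.sub_lt hK one_pos⟩ with hklast
    set T : Finset (Fin L) := Finset.univ.filter (fun i => h klast i ≠ 0) with hTdef
    have hT : T.card ≤ s := by
      have h1 := hsp klast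
      have h2 : {i : Fin L | h klast i ≠ 0} = (T : Set (Fin L)) := by
        ext i; simp [hTdef]
      rwa [IsSparse, h2, Set.ncard_coe_finset] at h1
    obtain ⟨S, hTS, hScard⟩ := Finset.exists_superset_card_eq hT (by simpa using hsL)
    refine ⟨S, hScard, ?_⟩
    rw [hx]
    apply Submodule.sum_mem
    intro k _
    by_cases hk : (k : ℕ) = K - 1
    · have hzero : K - 1 - (k : ℕ) = 0 := by omega
      rw [hzero, pow_zero, Matrix.one_mulVec]
      have hkk : k = klast := Fin.ext (by simp [hklast, hk])
      apply Submodule.mem_sup_right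
      refine ⟨fun j => h k j.val, ?_⟩
      rw [Matrix.mulVecLin_apply]
      ext i
      simp only [Matrix.mulVec, dotProduct, Matrix.submatrix_apply, id]
      rw [Finset.sum_coe_sort S (fun j => H i j * h k j)]
      apply Finset.sum_subset (Finset.subset_univ S)
      intro j _ hj
      have hjT : j ∉ T := fun hjT => hj (hTS hjT)
      have : h klast j = 0 := by
        by_contra hne
        exact hjT (by simp [hTdef, hne])
      rw [hkk, this, mul_zero]
    · have hk2 : (k : ℕ) < K := k.isLt
      obtain ⟨m, hm⟩ : ∃ m, K - 1 - (k : ℕ) = m + 1 := ⟨K - 2 - (k : ℕ), by omega⟩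
      rw [hm, pow_succ', ← Matrix.mulVec_mulVec]
      exact Submodule.mem_sup_left ⟨_, rfl⟩
  -- The finitely many subspaces cover ℝ^N, so one of them is ⊤.
  set p : {S : Finset (Fin L) // S.card = s} → Submodule ℝ (Fin N → ℝ) :=
    fun S => LinearMap.range
      (Matrix.fromCols D
        (H.submatrix id (Subtype.val : {j : Fin L // j ∈ S.val} → Fin L))).mulVecLin with hp
  have hcov : ⋃ i, (p i : Set (Fin N → ℝ)) = Set.univ := by
    apply Set.eq_univ_of_forall
    intro x
    obtain ⟨S, hc, hm⟩ := key x
    refine Set.mem_iUnion.2 ⟨⟨S, hc⟩, ?_⟩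
    show x ∈ p ⟨S, hc⟩
    rw [hp]
    simpa [range_fromColumns_aux] using hm
  obtain ⟨⟨S, hScard⟩, htop⟩ := Subspace.exists_eq_top_of_iUnion_eq_univ hcov
  have hrank : (Matrix.fromCols D
      (H.submatrix id (Subtype.val : {j : Fin L // j ∈ S} → Fin L))).rank = N := by
    unfold Matrix.rank
    have : LinearMap.range (Matrix.fromCols D
        (H.submatrix id (Subtype.val : {j : Fin L // j ∈ S} → Fin L))).mulVecLin = ⊤ := htop
    rw [this, finrank_top, Module.finrank_fintype_fun_eq_card, Fintype.card_fin]
  refine ⟨⟨S, hScard, hrank⟩, ?_⟩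
  -- N ≤ rank D + s
  have hHS : (H.submatrix id (Subtype.val : {j : Fin L // j ∈ S} → Fin L)).rank ≤ s := by
    have := Matrix.rank_le_card_width
      (H.submatrix id (Subtype.val : {j : Fin L // j ∈ S} → Fin L))
    rwa [Fintype.card_coe, hScard] at this
  have hsup := Submodule.finrank_sup_add_finrank_inf_eq
    (LinearMap.range D.mulVecLin)
    (LinearMap.range
      (H.submatrix id (Subtype.val : {j : Fin L // j ∈ S} → Fin L)).mulVecLin)
  have hN' : N ≤ D.rank +
      (H.submatrix id (Subtype.val : {j : Fin L // j ∈ S} → Fin L)).rank := by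
    have := hrank
    unfold Matrix.rank at this
    rw [range_fromColumns_aux] at this
    unfold Matrix.rank
    omega
  omega
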